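/- Let X be a topological space with basepoint x₀, and let 𝒰 = (U_α) and 𝒱 = (V_α) be two path open covers of (X,x₀). Then the family 𝒲 = (U_α ∩ V_α) is again a path open cover of (X,x₀), and the corresponding path Spanier subgroups satisfy π̃(𝒲,x₀) ⊆ π̃(𝒰,x₀) ∩ π̃(𝒱,x₀); consequently, the collection of all path Spanier subgroups of π₁(X,x₀) forms a neighbourhood family. -/

import Mathlib

open TopologicalSpace
open scoped Topology Pointwise

attribute [local instance] Path.Homotopic.setoid

/-- The collection of all left cosets `g • H` of members of a family of subgroups. -/
def leftCosets {G : Type*} [Group G] (Sig : Set (Subgroup G)) : Set (Set G) :=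
  {s | ∃ g : G, ∃ H ∈ Sig, s = g • (H : Set G)}

/-- A neighbourhood family on a group `G`: a (nonempty) collection of subgroups such that any two
members contain a common member. -/
def IsNbhdFamily {G : Type*} [Group G] (Sig : Set (Subgroup G)) : Prop :=
  Sig.Nonempty ∧ ∀ H ∈ Sig, ∀ K ∈ Sig, ∃ S ∈ Sig, S ≤ H ⊓ K

/-- The subgroup topology on `G` determined by the family `Sig`: the topology generated by all
left cosets of members of `Sig`. -/
def subgroupTopology {G : Type*} [Group G] (Sig : Set (Subgroup G)) : TopologicalSpace G :=
  generateFrom (leftCosets Sig)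

variable {X : Type*} [TopologicalSpace X]

/-- The homotopy class of a loop, as an element of the fundamental group. -/
noncomputable def fgClass {x₀ : X} (γ : Path x₀ x₀) : FundamentalGroup X x₀ :=
  ⟦γ⟧

/-- An open cover of the space `X`. -/
def IsOpenCover (U : Set (Set X)) : Prop :=
  (∀ u ∈ U, IsOpen u) ∧ ⋃₀ U = Set.univ

/-- The Spanier subgroup `π(𝒰, x₀)` of the fundamental group determined by an open cover `𝒰`:
the subgroup generated by all classes `[α * β * α⁻¹]` with `α` a path starting at `x₀` and `β`
a loop at `α(1)` lying in some member of `𝒰`. -/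
noncomputable def spanierSubgroup (U : Set (Set X)) (x₀ : X) :
    Subgroup (FundamentalGroup X x₀) :=
  Subgroup.closure
    {g | ∃ (x : X) (α : Path x₀ x) (β : Path x x) (u : Set X), u ∈ U ∧ Set.range β ⊆ u ∧
      g = fgClass ((α.trans β).trans α.symm)}

/-- The collection of all Spanier subgroups of `π₁(X, x₀)`. -/
def spanierFamily (x₀ : X) : Set (Subgroup (FundamentalGroup X x₀)) :=
  {H | ∃ U : Set (Set X), IsOpenCover U ∧ H = spanierSubgroup U x₀}

/-- A path open cover of `(X, x₀)`: a family of open sets `V x α`, indexed by the paths `α` in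
`X` from `x₀` to `x`, with `α(1) ∈ V x α`. -/
def IsPathOpenCover (x₀ : X) (V : (x : X) → Path x₀ x → Set X) : Prop :=
  ∀ (x : X) (α : Path x₀ x), IsOpen (V x α) ∧ α 1 ∈ V x α

/-- The path Spanier subgroup `π̃(𝒱, x₀)` determined by a path open cover `𝒱`: the subgroup
generated by all classes `[α * β * α⁻¹]` with `α` a path starting at `x₀` and `β` a loop at
`α(1)` lying in `V_α`. -/
noncomputable def pathSpanierSubgroup (x₀ : X) (V : (x : X) → Path x₀ x → Set X) :
    Subgroup (FundamentalGroup X x₀) :=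
  Subgroup.closure
    {g | ∃ (x : X) (α : Path x₀ x) (β : Path x x), Set.range β ⊆ V x α ∧
      g = fgClass ((α.trans β).trans α.symm)}

/-- The collection of all path Spanier subgroups of `π₁(X, x₀)`. -/
def pathSpanierFamily (x₀ : X) : Set (Subgroup (FundamentalGroup X x₀)) :=
  {H | ∃ V : (x : X) → Path x₀ x → Set X, IsPathOpenCover x₀ V ∧ H = pathSpanierSubgroup x₀ V}

/-- the pointwise intersection of two path open covers is a path open cover whose
path Spanier subgroup is contained in the intersection of the two path Spanier subgroups;
consequently the collection of all path Spanier subgroups is a neighbourhood family. -/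
theorem statement14_aux (x₀ : X) (U V : (x : X) → Path x₀ x → Set X)
    (hU : IsPathOpenCover x₀ U) (hV : IsPathOpenCover x₀ V) :
    IsPathOpenCover x₀ (fun x α => U x α ∩ V x α) :=
  fun x α => ⟨(hU x α).1.inter (hV x α).1, (hU x α).2, (hV x α).2⟩

theorem statement14 (x₀ : X) (U V : (x : X) → Path x₀ x → Set X)
    (hU : IsPathOpenCover x₀ U) (hV : IsPathOpenCover x₀ V) :
    IsPathOpenCover x₀ (fun x α => U x α ∩ V x α) ∧
    pathSpanierSubgroup x₀ (fun x α => U x α ∩ V x α) ≤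
      pathSpanierSubgroup x₀ U ⊓ pathSpanierSubgroup x₀ V ∧
    IsNbhdFamily (pathSpanierFamily x₀) := by
  refine ⟨fun x α => ⟨(hU x α).1.inter (hV x α).1, (hU x α).2, (hV x α).2⟩, ?_, ?_⟩
  · refine le_inf ?_ ?_ <;>
      refine Subgroup.closure_mono fun g ⟨x, α, β, hβ, hg⟩ =>
        ⟨x, α, β, ?_, hg⟩
    · exact hβ.trans Set.inter_subset_left
    · exact hβ.trans Set.inter_subset_right
  · constructor
    · exact ⟨_, fun _ _ => Set.univ, fun x α => ⟨isOpen_univ, trivial⟩, rfl⟩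
    · rintro H ⟨A, hA, rfl⟩ K ⟨B, hB, rfl⟩
      refine ⟨pathSpanierSubgroup x₀ (fun x α => A x α ∩ B x α),
        ⟨_, (statement14_aux x₀ A B hA hB), rfl⟩, ?_⟩
      refine le_inf ?_ ?_ <;>
        refine Subgroup.closure_mono fun g ⟨x, α, β, hβ, hg⟩ =>
          ⟨x, α, β, ?_, hg⟩
      · exact hβ.trans Set.inter_subset_left
      · exact hβ.trans Set.inter_subset_right
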